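/- A meromorphic function f : D → ℂ∪{∞} is normal along a simple curve γ (ending at a boundary point) if and only if it is normal along every curve γ₁ in the equivalence class [γ] (where γ₁ ∼ γ means γ₁ ⊆ Δ_r γ for some r). -/

import Mathlib

open Complex Set Filter Topology

noncomputable section

def unitDisc : Set ℂ := {z : ℂ | ‖z‖ < 1}

def dph (z w : ℂ) : ℝ := ‖(z - w) / (1 - z * (starRingEnd ℂ) w)‖

def dhyp (z w : ℂ) : ℝ := Real.log ((1 + dph z w) / (1 - dph z w))

def phiM (w z : ℂ) : ℂ := (z + w) / (1 + z * (starRingEnd ℂ) w)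

/-- The spherical (chordal) metric on the Riemann sphere `OnePoint ℂ`. -/
def sphDist : OnePoint ℂ → OnePoint ℂ → ℝ
  | Option.some z, Option.some w =>
      2 * ‖z - w‖ /
        (Real.sqrt (1 + ‖z‖ ^ 2) * Real.sqrt (1 + ‖w‖ ^ 2))
  | Option.some z, Option.none => 2 / Real.sqrt (1 + ‖z‖ ^ 2)
  | Option.none, Option.some w => 2 / Real.sqrt (1 + ‖w‖ ^ 2)
  | Option.none, Option.none => 0

/-- Curvilinear angle along `γ` with pseudo-hyperbolic deflection `r`. -/
def Delta (r : ℝ) (γ : Set ℂ) : Set ℂ := ⋃ w ∈ γ, {z ∈ unitDisc | dph z w ≤ r}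

/-- A simple curve in the unit disc terminating at the boundary point `p`. -/
structure SimpleCurve (p : ℂ) where
  toFun : ℝ → ℂ
  cont : ContinuousOn toFun (Set.Ico 0 1)
  inj : Set.InjOn toFun (Set.Ico 0 1)
  inDisc : ∀ t ∈ Set.Ico (0:ℝ) 1, toFun t ∈ unitDisc
  tends : Filter.Tendsto toFun (nhdsWithin 1 (Set.Ico 0 1)) (nhds p)

def SimpleCurve.carrier {p : ℂ} (γ : SimpleCurve p) : Set ℂ := γ.toFun '' Set.Ico 0 1

/-- The family `{f ∘ φ_w : w ∈ γ}` is normal on `U`: every sequence admits a subsequence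
converging uniformly on compact subsets of `U` in the spherical metric. -/
def NormalAlong (f : ℂ → OnePoint ℂ) (γ : Set ℂ) (U : Set ℂ) : Prop :=
  ∀ w : ℕ → ℂ, (∀ n, w n ∈ γ) →
    ∃ φ : ℕ → ℕ, StrictMono φ ∧ ∃ h : ℂ → OnePoint ℂ,
      ∀ K : Set ℂ, K ⊆ U → IsCompact K → ∀ ε > 0, ∃ N, ∀ n ≥ N, ∀ z ∈ K,
        sphDist (f (phiM (w (φ n)) z)) (h z) < ε

-- The Riemann-sphere-valued extension of a meromorphic function: at poles the value is ∞.
open scoped Classical in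
def toSphere (f : ℂ → ℂ) (z : ℂ) : OnePoint ℂ :=
  if AnalyticAt ℂ f z then (f z : OnePoint ℂ) else (OnePoint.infty : OnePoint ℂ)

-- The spherical derivative |f'|/(1+|f|²), extended at poles via 1/f.
open scoped Classical in
def sphDeriv (f : ℂ → ℂ) (z : ℂ) : ℝ :=
  if AnalyticAt ℂ f z then ‖deriv f z‖ / (1 + ‖f z‖ ^ 2)
  else ‖deriv (fun w => (f w)⁻¹) z‖ / (1 + ‖(f z)⁻¹‖ ^ 2)

def Complex.abs : AbsoluteValue ℂ ℝ := NormedField.toAbsoluteValue ℂ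

@[simp] lemma Complex.norm_eq_abs (z : ℂ) : ‖z‖ = Complex.abs z := rfl

lemma Complex.sq_abs (z : ℂ) : Complex.abs z ^ 2 = Complex.normSq z := Complex.sq_norm z

lemma Complex.re_le_abs (z : ℂ) : z.re ≤ Complex.abs z := Complex.re_le_norm z

@[simp] lemma Complex.abs_conj (z : ℂ) : Complex.abs ((starRingEnd ℂ) z) = Complex.abs z :=
  Complex.norm_conj z

lemma Complex.continuous_abs : Continuous Complex.abs := continuous_norm

@[simp] lemma Complex.abs_ofReal (r : ℝ) : Complex.abs (r : ℂ) = |r| := Complex.norm_real r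

set_option maxHeartbeats 1000000

namespace SphAux

local notation "𝕤" => Real.sqrt

lemma S_pos (a : ℂ) : 0 < 𝕤 (1 + Complex.abs a ^ 2) :=
  Real.sqrt_pos.2 (by positivity)

lemma sq_S (a : ℂ) : (𝕤 (1 + Complex.abs a ^ 2)) ^ 2 = 1 + Complex.abs a ^ 2 :=
  Real.sq_sqrt (by positivity)

lemma one_le_S (a : ℂ) : 1 ≤ 𝕤 (1 + Complex.abs a ^ 2) := by
  nlinarith [sq_S a, Real.sqrt_nonneg (1 + Complex.abs a ^ 2), sq_nonneg (Complex.abs a),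
    sq_nonneg (𝕤 (1 + Complex.abs a ^ 2) - 1)]

lemma abs_le_S (a : ℂ) : Complex.abs a ≤ 𝕤 (1 + Complex.abs a ^ 2) := by
  nlinarith [sq_S a, Real.sqrt_nonneg (1 + Complex.abs a ^ 2),
    AbsoluteValue.nonneg Complex.abs a,
    sq_nonneg (𝕤 (1 + Complex.abs a ^ 2) - Complex.abs a)]

/-- Cauchy–Schwarz style bound. -/
lemma abs_one_add_mul_conj_le (a b : ℂ) :
    Complex.abs (1 + a * (starRingEnd ℂ) b) ≤
      𝕤 (1 + Complex.abs a ^ 2) * 𝕤 (1 + Complex.abs b ^ 2) := by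
  have h1 : Complex.abs (1 + a * (starRingEnd ℂ) b) ^ 2 ≤
      (1 + Complex.abs a ^ 2) * (1 + Complex.abs b ^ 2) := by
    rw [Complex.sq_abs, Complex.normSq_add]
    have hre : (1 * (starRingEnd ℂ) (a * (starRingEnd ℂ) b)).re ≤
        Complex.abs a * Complex.abs b := by
      calc (1 * (starRingEnd ℂ) (a * (starRingEnd ℂ) b)).re
          ≤ Complex.abs (1 * (starRingEnd ℂ) (a * (starRingEnd ℂ) b)) := Complex.re_le_abs _
        _ = Complex.abs a * Complex.abs b := by
            simp [map_mul]
    have hsq : Complex.normSq (a * (starRingEnd ℂ) b)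
        = Complex.abs a ^ 2 * Complex.abs b ^ 2 := by
      rw [← Complex.sq_abs]; simp [map_mul, mul_pow]
    have h2 : 2 * (Complex.abs a * Complex.abs b) ≤ Complex.abs a ^ 2 + Complex.abs b ^ 2 := by
      nlinarith [sq_nonneg (Complex.abs a - Complex.abs b)]
    simp only [Complex.normSq_one, hsq]
    nlinarith [hre]
  nlinarith [AbsoluteValue.nonneg Complex.abs (1 + a * (starRingEnd ℂ) b), sq_S a, sq_S b,
    mul_pos (S_pos a) (S_pos b),
    sq_nonneg (Complex.abs (1 + a * (starRingEnd ℂ) b) -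
      𝕤 (1 + Complex.abs a ^ 2) * 𝕤 (1 + Complex.abs b ^ 2))]

lemma sph_self (x : OnePoint ℂ) : sphDist x x = 0 := by
  cases x <;> simp [sphDist]

lemma sph_comm (x y : OnePoint ℂ) : sphDist x y = sphDist y x := by
  obtain _ | a := x <;> obtain _ | b := y
  · rfl
  · rfl
  · rfl
  · show 2 * Complex.abs (a - b) / _ = 2 * Complex.abs (b - a) / _
    rw [AbsoluteValue.map_sub, mul_comm (𝕤 (1 + ‖a‖ ^ 2))]

lemma sph_nonneg (x y : OnePoint ℂ) : 0 ≤ sphDist x y := by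
  obtain _ | a := x <;> obtain _ | b := y
  · exact le_of_eq rfl
  · exact le_of_lt (by positivity : (0:ℝ) < 2 / 𝕤 (1 + Complex.abs b ^ 2))
  · exact le_of_lt (by positivity : (0:ℝ) < 2 / 𝕤 (1 + Complex.abs a ^ 2))
  · show (0:ℝ) ≤ 2 * Complex.abs (a - b) / _
    positivity

lemma S_le_S_add_abs (b c : ℂ) :
    𝕤 (1 + Complex.abs b ^ 2) ≤ 𝕤 (1 + Complex.abs c ^ 2) + Complex.abs (b - c) := by
  have h1 : Complex.abs b ≤ Complex.abs c + Complex.abs (b - c) := by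
    calc Complex.abs b = Complex.abs (c + (b - c)) := by ring_nf
      _ ≤ Complex.abs c + Complex.abs (b - c) := AbsoluteValue.add_le _ _ _
  have h2 : 𝕤 (1 + Complex.abs b ^ 2) ≤ 𝕤 (1 + (Complex.abs c + Complex.abs (b-c)) ^ 2) := by
    apply Real.sqrt_le_sqrt
    nlinarith [AbsoluteValue.nonneg Complex.abs b, AbsoluteValue.nonneg Complex.abs c,
      AbsoluteValue.nonneg Complex.abs (b - c)]
  refine h2.trans ?_
  have hs : (0:ℝ) ≤ 1 + (Complex.abs c + Complex.abs (b-c)) ^ 2 := by positivity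
  have h3 := Real.sq_sqrt hs
  nlinarith [Real.sqrt_nonneg (1 + (Complex.abs c + Complex.abs (b-c)) ^ 2),
    S_pos c, sq_S c, abs_le_S c, AbsoluteValue.nonneg Complex.abs (b - c),
    sq_nonneg (𝕤 (1 + (Complex.abs c + Complex.abs (b-c)) ^ 2) -
      (𝕤 (1 + Complex.abs c ^ 2) + Complex.abs (b - c)))]

lemma sph_triangle (x y z : OnePoint ℂ) : sphDist x z ≤ sphDist x y + sphDist y z := by
  obtain _ | a := x <;> obtain _ | b := y <;> obtain _ | c := z
  · show (0:ℝ) ≤ 0 + 0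
    norm_num
  · -- ∞ ∞ c
    show (2:ℝ) / _ ≤ 0 + 2 / _
    rw [zero_add]
  · -- ∞ b ∞
    show (0:ℝ) ≤ 2 / _ + 2 / _
    positivity
  · -- ∞ b c  : 2/Sc ≤ 2/Sb + 2|b-c|/(Sb Sc)
    show (2:ℝ) / 𝕤 (1 + Complex.abs c ^ 2) ≤
      2 / 𝕤 (1 + Complex.abs b ^ 2) +
      2 * Complex.abs (b - c) / (𝕤 (1 + Complex.abs b ^ 2) * 𝕤 (1 + Complex.abs c ^ 2))
    have key := S_le_S_add_abs b c
    have hSb := S_pos b; have hSc := S_pos c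
    rw [div_add_div _ _ (ne_of_gt hSb) (ne_of_gt (mul_pos hSb hSc)),
      div_le_div_iff₀ hSc (by positivity)]
    have hmul := mul_le_mul_of_nonneg_left key (le_of_lt (mul_pos hSb hSc))
    nlinarith [hmul, sq_S b]
  · -- a ∞ ∞
    show (2:ℝ) / _ ≤ 2 / _ + 0
    rw [add_zero]
  · -- a ∞ c : 2|a-c|/(Sa Sc) ≤ 2/Sa + 2/Sc
    show 2 * Complex.abs (a - c) / (𝕤 (1 + Complex.abs a ^ 2) * 𝕤 (1 + Complex.abs c ^ 2)) ≤
      2 / 𝕤 (1 + Complex.abs a ^ 2) + 2 / 𝕤 (1 + Complex.abs c ^ 2)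
    have hSa := S_pos a; have hSc := S_pos c
    rw [div_add_div _ _ (ne_of_gt hSa) (ne_of_gt hSc),
      div_le_div_iff₀ (mul_pos hSa hSc) (mul_pos hSa hSc)]
    have h1 : Complex.abs (a - c) ≤ Complex.abs a + Complex.abs c := by
      have := AbsoluteValue.add_le Complex.abs a (-c)
      simpa [sub_eq_add_neg] using this
    have h2 := abs_le_S a; have h3 := abs_le_S c
    nlinarith [AbsoluteValue.nonneg Complex.abs (a - c), mul_pos hSa hSc,
      mul_le_mul_of_nonneg_right (h1.trans (add_le_add h2 h3))
        (le_of_lt (mul_pos hSa hSc))]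
  · -- a b ∞ : 2/Sa ≤ 2|a-b|/(SaSb) + 2/Sb
    show (2:ℝ) / 𝕤 (1 + Complex.abs a ^ 2) ≤
      2 * Complex.abs (a - b) / (𝕤 (1 + Complex.abs a ^ 2) * 𝕤 (1 + Complex.abs b ^ 2)) +
      2 / 𝕤 (1 + Complex.abs b ^ 2)
    have key := S_le_S_add_abs b a
    have hSa := S_pos a; have hSb := S_pos b
    rw [div_add_div _ _ (ne_of_gt (mul_pos hSa hSb)) (ne_of_gt hSb),
      div_le_div_iff₀ hSa (by positivity)]
    have hmul := mul_le_mul_of_nonneg_left key (le_of_lt (mul_pos hSa hSb))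
    have habs : Complex.abs (b - a) = Complex.abs (a - b) := AbsoluteValue.map_sub _ _ _
    rw [habs] at hmul
    nlinarith [hmul, sq_S b]
  · -- a b c
    show 2 * Complex.abs (a - c) / (𝕤 (1 + Complex.abs a ^ 2) * 𝕤 (1 + Complex.abs c ^ 2)) ≤
      2 * Complex.abs (a - b) / (𝕤 (1 + Complex.abs a ^ 2) * 𝕤 (1 + Complex.abs b ^ 2)) +
      2 * Complex.abs (b - c) / (𝕤 (1 + Complex.abs b ^ 2) * 𝕤 (1 + Complex.abs c ^ 2))
    have hSa := S_pos a; have hSb := S_pos b; have hSc := S_pos c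
    have key : Complex.abs (a - c) * 𝕤 (1 + Complex.abs b ^ 2) ≤
        Complex.abs (a - b) * 𝕤 (1 + Complex.abs c ^ 2) +
        Complex.abs (b - c) * 𝕤 (1 + Complex.abs a ^ 2) := by
      have hid : (a - c) * (1 + b * (starRingEnd ℂ) b) =
          (a - b) * (1 + c * (starRingEnd ℂ) b) + (b - c) * (1 + a * (starRingEnd ℂ) b) := by
        ring
      have habs : Complex.abs (a - c) * (1 + Complex.abs b ^ 2) ≤
          Complex.abs (a - b) * Complex.abs (1 + c * (starRingEnd ℂ) b) +
          Complex.abs (b - c) * Complex.abs (1 + a * (starRingEnd ℂ) b) := by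
        have h := hid ▸ (AbsoluteValue.add_le Complex.abs
          ((a - b) * (1 + c * (starRingEnd ℂ) b)) ((b - c) * (1 + a * (starRingEnd ℂ) b)))
        rw [map_mul, map_mul, map_mul] at h
        have hbb : Complex.abs (1 + b * (starRingEnd ℂ) b) = 1 + Complex.abs b ^ 2 := by
          rw [Complex.mul_conj, ← Complex.ofReal_one, ← Complex.ofReal_add, Complex.abs_ofReal,
            Complex.sq_abs]
          exact abs_of_nonneg (by nlinarith [Complex.normSq_nonneg b])
        rwa [hbb] at h
      have h1 := abs_one_add_mul_conj_le c b
      have h2 := abs_one_add_mul_conj_le a b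
      have e1 := mul_le_mul_of_nonneg_left h1 (AbsoluteValue.nonneg Complex.abs (a - b))
      have e2 := mul_le_mul_of_nonneg_left h2 (AbsoluteValue.nonneg Complex.abs (b - c))
      nlinarith [habs, e1, e2, sq_S b, AbsoluteValue.nonneg Complex.abs (a - c)]
    rw [div_add_div _ _ (ne_of_gt (mul_pos hSa hSb)) (ne_of_gt (mul_pos hSb hSc)),
      div_le_div_iff₀ (mul_pos hSa hSc) (by positivity)]
    have hmul := mul_le_mul_of_nonneg_left key
      (by positivity : (0:ℝ) ≤ 2 * (𝕤 (1 + Complex.abs a ^ 2) * 𝕤 (1 + Complex.abs b ^ 2) * 𝕤 (1 + Complex.abs c ^ 2)))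
    nlinarith [hmul]



lemma toSphere_eq_some {f : ℂ → ℂ} {z : ℂ} (h : AnalyticAt ℂ f z) :
    toSphere f z = Option.some (f z) := by
  rw [toSphere, if_pos h]; rfl

lemma toSphere_eq_none {f : ℂ → ℂ} {z : ℂ} (h : ¬ AnalyticAt ℂ f z) :
    toSphere f z = Option.none := by
  rw [toSphere, if_neg h]; rfl

lemma sph_some_le (a b : ℂ) :
    sphDist (Option.some a) (Option.some b) ≤ 2 * Complex.abs (a - b) := by
  show 2 * Complex.abs (a - b) / _ ≤ 2 * Complex.abs (a - b)
  apply div_le_self (by positivity)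
  calc (1:ℝ) = 1 * 1 := (one_mul 1).symm
    _ ≤ _ := mul_le_mul (one_le_S a) (one_le_S b) zero_le_one (le_trans zero_le_one (one_le_S a))

lemma sph_some_none_le {a : ℂ} {R : ℝ} (hR : 0 < R) (ha : R ≤ Complex.abs a) :
    sphDist (Option.some a) Option.none ≤ 2 / R := by
  show 2 / Real.sqrt (1 + Complex.abs a ^ 2) ≤ 2 / R
  apply div_le_div_of_nonneg_left (by norm_num) hR
  exact le_trans ha (abs_le_S a)

lemma sph_none_some_ge {a : ℂ} {M : ℝ} (hM : Complex.abs a ≤ M) :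
    2 / Real.sqrt (1 + M ^ 2) ≤ sphDist Option.none (Option.some a) := by
  show 2 / Real.sqrt (1 + M ^ 2) ≤ 2 / Real.sqrt (1 + Complex.abs a ^ 2)
  have h0 : 0 ≤ M := le_trans (AbsoluteValue.nonneg _ _) hM
  apply div_le_div_of_nonneg_left (by norm_num) (S_pos a)
  apply Real.sqrt_le_sqrt
  nlinarith [AbsoluteValue.nonneg Complex.abs a]

/-- ε-δ spherical continuity. -/
def SCont (F : ℂ → OnePoint ℂ) (z : ℂ) : Prop :=
  ∀ ε > 0, ∃ δ > 0, ∀ y : ℂ, Complex.abs (y - z) < δ → sphDist (F y) (F z) < ε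

lemma scont_toSphere {f : ℂ → ℂ} (hf : MeromorphicOn f unitDisc)
    (hnf : ¬ ∃ s ∈ unitDisc, ¬ AnalyticAt ℂ f s ∧
      ∃ g : ℂ → ℂ, AnalyticAt ℂ g s ∧ f =ᶠ[𝓝[≠] s] g) :
    ∀ z ∈ unitDisc, SCont (toSphere f) z := by
  intro z hz
  by_cases han : AnalyticAt ℂ f z
  · -- analytic point
    intro ε hε
    obtain ⟨δ₁, hδ₁, h₁⟩ := Metric.continuousAt_iff.1 han.continuousAt (ε/4) (by linarith)
    obtain ⟨δ₂, hδ₂, h₂⟩ := Metric.eventually_nhds_iff.1 han.eventually_analyticAt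
    refine ⟨min δ₁ δ₂, lt_min hδ₁ hδ₂, ?_⟩
    intro y hy
    have hyd : dist y z < δ₁ := by rw [Complex.dist_eq]; exact lt_of_lt_of_le hy (min_le_left _ _)
    have hyd2 : dist y z < δ₂ := by rw [Complex.dist_eq]; exact lt_of_lt_of_le hy (min_le_right _ _)
    rw [toSphere_eq_some (h₂ hyd2), toSphere_eq_some han]
    calc sphDist (Option.some (f y)) (Option.some (f z)) ≤ 2 * Complex.abs (f y - f z) :=
        sph_some_le _ _
      _ < ε := by
        have := h₁ hyd
        rw [Complex.dist_eq, Complex.norm_eq_abs] at this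
        linarith
  · -- non-analytic : must be a pole
    have hm : MeromorphicAt f z := hf z hz
    rcases htop : meromorphicOrderAt f z with _ | n
    · exfalso
      exact hnf ⟨z, hz, han, fun _ => 0, analyticAt_const, by
        have h0 : ∀ᶠ y in 𝓝[≠] z, f y = 0 := meromorphicOrderAt_eq_top_iff.1 htop
        exact h0⟩
    · obtain ⟨gp, hgp, hgz, hev⟩ := (meromorphicOrderAt_eq_int_iff hm (n := n)).1 htop
      by_cases hn : 0 ≤ n
      · exfalso
        refine hnf ⟨z, hz, han, fun y => (y - z) ^ (n.toNat) * gp y, ?_, ?_⟩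
        · exact ((analyticAt_id.sub analyticAt_const).pow _).mul hgp
        · filter_upwards [hev] with y hy
          have hzp : (y - z) ^ (n:ℤ) = (y - z) ^ n.toNat := by
            rw [← zpow_natCast, Int.toNat_of_nonneg hn]
          rw [hy, smul_eq_mul, hzp]
      · push_neg at hn
        set m := (-n).toNat with hmdef
        have hm1 : 1 ≤ m := by omega
        have hnm : n = -(m : ℤ) := by omega
        intro ε hε
        have hc : 0 < Complex.abs (gp z) := AbsoluteValue.pos _ hgz
        set c := Complex.abs (gp z) with hcdef
        obtain ⟨δ₁, hδ₁, h₁⟩ := Metric.continuousAt_iff.1 hgp.continuousAt (c/2) (by linarith)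
        obtain ⟨δ₂, hδ₂, h₂⟩ := Metric.eventually_nhds_iff.1 (eventually_nhdsWithin_iff.1 hev)
        obtain ⟨δ₃, hδ₃, h₃⟩ :=
          Metric.eventually_nhds_iff.1 (eventually_nhdsWithin_iff.1 hm.eventually_analyticAt)
        refine ⟨min (min δ₁ (min δ₂ δ₃)) (min 1 (ε*c/8)), by positivity, ?_⟩
        intro y hy
        by_cases hyz : y = z
        · rw [hyz, sph_self]; exact hε
        · have hyz' : y ∈ ({z}ᶜ : Set ℂ) := by simp [hyz]
          have hd1 : dist y z < δ₁ := by
            rw [Complex.dist_eq]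
            exact lt_of_lt_of_le hy ((min_le_left _ _).trans (min_le_left _ _))
          have hd2 : dist y z < δ₂ := by
            rw [Complex.dist_eq]
            exact lt_of_lt_of_le hy
              ((min_le_left _ _).trans ((min_le_right _ _).trans (min_le_left _ _)))
          have hd3 : dist y z < δ₃ := by
            rw [Complex.dist_eq]
            exact lt_of_lt_of_le hy
              ((min_le_left _ _).trans ((min_le_right _ _).trans (min_le_right _ _)))
          have hd4 : Complex.abs (y - z) < 1 :=
            lt_of_lt_of_le hy ((min_le_right _ _).trans (min_le_left _ _))
          have hd5 : Complex.abs (y - z) < ε*c/8 :=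
            lt_of_lt_of_le hy ((min_le_right _ _).trans (min_le_right _ _))
          have hany : AnalyticAt ℂ f y := h₃ hd3 hyz'
          have hfy : f y = (y - z) ^ (n : ℤ) • gp y := h₂ hd2 hyz'
          have hgy : c/2 ≤ Complex.abs (gp y) := by
            have hdist := h₁ hd1
            rw [Complex.dist_eq, Complex.norm_eq_abs] at hdist
            have htr := AbsoluteValue.add_le Complex.abs (gp y) (gp z - gp y)
            rw [show gp y + (gp z - gp y) = gp z by ring] at htr
            have habs2 : Complex.abs (gp z - gp y) = Complex.abs (gp y - gp z) :=
              AbsoluteValue.map_sub _ _ _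
            rw [habs2] at htr
            linarith
          have habsyz : 0 < Complex.abs (y - z) :=
            AbsoluteValue.pos _ (sub_ne_zero_of_ne hyz)
          -- |f y| = |gp y| / |y-z|^m
          have hfabs : Complex.abs (f y) = Complex.abs (gp y) / (Complex.abs (y - z)) ^ m := by
            rw [hfy, smul_eq_mul, map_mul, map_zpow₀, hnm, zpow_neg, zpow_natCast]
            rw [inv_mul_eq_div, div_eq_div_iff (by positivity) (by positivity)]
            try ring
          have hpowle : (Complex.abs (y - z)) ^ m ≤ Complex.abs (y - z) := by
            calc (Complex.abs (y - z)) ^ m ≤ (Complex.abs (y - z)) ^ 1 :=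
                pow_le_pow_of_le_one (le_of_lt habsyz) (le_of_lt hd4) hm1
              _ = Complex.abs (y - z) := pow_one _
          have hbig : 4 / ε < Complex.abs (f y) := by
            rw [hfabs]
            have h8 : (0:ℝ) < ε*c/8 := by positivity
            calc (4:ℝ)/ε = (c/2) / (ε*c/8) := by
                  field_simp
                  ring
              _ < (c/2) / Complex.abs (y - z) := by
                  apply div_lt_div_of_pos_left (by linarith) habsyz hd5
              _ ≤ Complex.abs (gp y) / Complex.abs (y - z) := by gcongr
              _ ≤ Complex.abs (gp y) / (Complex.abs (y - z)) ^ m := by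
                  apply div_le_div_of_nonneg_left ?_ (by positivity) hpowle
                  exact AbsoluteValue.nonneg _ _
          rw [toSphere_eq_some hany, toSphere_eq_none han]
          have h4ε : 0 < 4/ε := by positivity
          calc sphDist (Option.some (f y)) Option.none ≤ 2 / (4/ε) :=
              sph_some_none_le h4ε (le_of_lt hbig)
            _ = ε / 2 := by field_simp; ring
            _ < ε := by linarith
  -- end

end SphAux

namespace MobAux


lemma one_add_mul_conj_ne {z w : ℂ} (hz : Complex.abs z < 1) (hw : Complex.abs w < 1) :
    (1 : ℂ) + z * (starRingEnd ℂ) w ≠ 0 := by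
  intro h
  have h2 : z * (starRingEnd ℂ) w = -1 := by linear_combination h
  have h1 : Complex.abs (z * (starRingEnd ℂ) w) < 1 := by
    rw [map_mul, Complex.abs_conj]
    nlinarith [AbsoluteValue.nonneg Complex.abs z, AbsoluteValue.nonneg Complex.abs w]
  rw [h2] at h1
  simp at h1

lemma one_sub_mul_conj_ne {z w : ℂ} (hz : Complex.abs z < 1) (hw : Complex.abs w < 1) :
    (1 : ℂ) - z * (starRingEnd ℂ) w ≠ 0 := by
  intro h
  have h2 : z * (starRingEnd ℂ) w = 1 := by linear_combination -h
  have h1 : Complex.abs (z * (starRingEnd ℂ) w) < 1 := by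
    rw [map_mul, Complex.abs_conj]
    nlinarith [AbsoluteValue.nonneg Complex.abs z, AbsoluteValue.nonneg Complex.abs w]
  rw [h2] at h1
  simp at h1

lemma normSq_identity (z w : ℂ) :
    Complex.normSq (1 + z * (starRingEnd ℂ) w) - Complex.normSq (z + w)
      = (1 - Complex.normSq z) * (1 - Complex.normSq w) := by
  simp only [Complex.normSq_apply, Complex.add_re, Complex.add_im, Complex.mul_re,
    Complex.mul_im, Complex.conj_re, Complex.conj_im, Complex.one_re, Complex.one_im]
  ring

lemma normSq_identity' (z w : ℂ) :
    Complex.normSq (1 - z * (starRingEnd ℂ) w) - Complex.normSq (z - w)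
      = (1 - Complex.normSq z) * (1 - Complex.normSq w) := by
  simp only [Complex.normSq_apply, Complex.sub_re, Complex.sub_im, Complex.mul_re,
    Complex.mul_im, Complex.conj_re, Complex.conj_im, Complex.one_re, Complex.one_im]
  ring

lemma phiM_mem {w z : ℂ} (hw : Complex.abs w < 1) (hz : Complex.abs z < 1) :
    Complex.abs (phiM w z) < 1 := by
  rw [phiM, map_div₀]
  have hden : (1:ℂ) + z * (starRingEnd ℂ) w ≠ 0 := one_add_mul_conj_ne hz hw
  have hdpos : 0 < Complex.abs (1 + z * (starRingEnd ℂ) w) := AbsoluteValue.pos _ hden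
  rw [div_lt_one hdpos]
  have hid := normSq_identity z w
  have hz' : Complex.normSq z < 1 := by rw [← Complex.sq_abs]; nlinarith [AbsoluteValue.nonneg Complex.abs z]
  have hw' : Complex.normSq w < 1 := by rw [← Complex.sq_abs]; nlinarith [AbsoluteValue.nonneg Complex.abs w]
  have : Complex.normSq (z + w) < Complex.normSq (1 + z * (starRingEnd ℂ) w) := by nlinarith
  rw [← Complex.sq_abs, ← Complex.sq_abs] at this
  nlinarith [AbsoluteValue.nonneg Complex.abs (z + w), hdpos]

lemma dph_lt_one {z w : ℂ} (hz : Complex.abs z < 1) (hw : Complex.abs w < 1) :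
    dph z w < 1 := by
  rw [dph, Complex.norm_eq_abs, map_div₀]
  have hden : (1:ℂ) - z * (starRingEnd ℂ) w ≠ 0 := one_sub_mul_conj_ne hz hw
  have hdpos : 0 < Complex.abs (1 - z * (starRingEnd ℂ) w) := AbsoluteValue.pos _ hden
  rw [div_lt_one hdpos]
  have hid := normSq_identity' z w
  have hz' : Complex.normSq z < 1 := by rw [← Complex.sq_abs]; nlinarith [AbsoluteValue.nonneg Complex.abs z]
  have hw' : Complex.normSq w < 1 := by rw [← Complex.sq_abs]; nlinarith [AbsoluteValue.nonneg Complex.abs w]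
  have : Complex.normSq (z - w) < Complex.normSq (1 - z * (starRingEnd ℂ) w) := by nlinarith
  rw [← Complex.sq_abs, ← Complex.sq_abs] at this
  nlinarith [AbsoluteValue.nonneg Complex.abs (z - w), hdpos]

lemma phiM_inv_right {v s : ℂ} (hv : Complex.abs v < 1) (hs : Complex.abs s < 1) :
    phiM v ((s - v) / (1 - s * (starRingEnd ℂ) v)) = s := by
  have hd : (1:ℂ) - s * (starRingEnd ℂ) v ≠ 0 := one_sub_mul_conj_ne hs hv
  have hvv : (1:ℂ) - v * (starRingEnd ℂ) v ≠ 0 := one_sub_mul_conj_ne hv hv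
  have hden : 1 + ((s - v) / (1 - s * (starRingEnd ℂ) v)) * (starRingEnd ℂ) v
      = (1 - v * (starRingEnd ℂ) v) / (1 - s * (starRingEnd ℂ) v) := by
    field_simp
    ring
  rw [phiM, hden, div_eq_iff (div_ne_zero hvv hd)]
  field_simp
  ring

lemma mobius_base_inj {q s v v' : ℂ} (hq : Complex.abs q < 1) (hs : Complex.abs s < 1)
    (hv : Complex.abs v < 1) (hv' : Complex.abs v' < 1)
    (h1 : phiM v q = s) (h2 : phiM v' q = s) : v = v' := by
  rw [phiM, div_eq_iff (one_add_mul_conj_ne hq hv)] at h1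
  rw [phiM, div_eq_iff (one_add_mul_conj_ne hq hv')] at h2
  have e3 : v - v' = s * q * ((starRingEnd ℂ) v - (starRingEnd ℂ) v') := by
    linear_combination h1 - h2
  by_contra hne
  have hpos : 0 < Complex.abs (v - v') := AbsoluteValue.pos _ (sub_ne_zero_of_ne hne)
  have habs : Complex.abs (v - v') = Complex.abs s * Complex.abs q * Complex.abs (v - v') := by
    calc Complex.abs (v - v') = Complex.abs (s * q * ((starRingEnd ℂ) v - (starRingEnd ℂ) v')) := by rw [← e3]
      _ = Complex.abs s * Complex.abs q * Complex.abs ((starRingEnd ℂ) (v - v')) := by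
          rw [map_mul, map_mul, show (starRingEnd ℂ) v - (starRingEnd ℂ) v'
            = (starRingEnd ℂ) (v - v') from (map_sub (starRingEnd ℂ) v v').symm]
      _ = Complex.abs s * Complex.abs q * Complex.abs (v - v') := by rw [Complex.abs_conj]
  have hsq : Complex.abs s * Complex.abs q < 1 := by
    nlinarith [AbsoluteValue.nonneg Complex.abs s, AbsoluteValue.nonneg Complex.abs q]
  nlinarith [habs, hpos, hsq]

lemma psi_denom_ne {u w z : ℂ} (hu : Complex.abs u < 1) (hw : Complex.abs w < 1)
    (hz : Complex.abs z < 1) :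
    ((starRingEnd ℂ) u - (starRingEnd ℂ) w) * z + (1 - u * (starRingEnd ℂ) w) ≠ 0 := by
  intro h
  have hd : (1:ℂ) - u * (starRingEnd ℂ) w ≠ 0 := one_sub_mul_conj_ne hu hw
  have he : ((starRingEnd ℂ) u - (starRingEnd ℂ) w) * z = -(1 - u * (starRingEnd ℂ) w) := by
    linear_combination h
  have h1 : Complex.abs (((starRingEnd ℂ) u - (starRingEnd ℂ) w) * z)
      = Complex.abs (1 - u * (starRingEnd ℂ) w) := by rw [he, map_neg_eq_map]
  have h2 : Complex.abs ((starRingEnd ℂ) u - (starRingEnd ℂ) w)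
      = Complex.abs (u - w) := by
    rw [← map_sub, Complex.abs_conj]
  have h3 : Complex.abs (u - w) < Complex.abs (1 - u * (starRingEnd ℂ) w) := by
    have := dph_lt_one hu hw
    rw [dph, Complex.norm_eq_abs, map_div₀, div_lt_one (AbsoluteValue.pos _ (one_sub_mul_conj_ne hu hw))] at this
    exact this
  rw [map_mul, h2] at h1
  nlinarith [AbsoluteValue.nonneg Complex.abs (u - w), AbsoluteValue.nonneg Complex.abs z,
    AbsoluteValue.pos Complex.abs hd]

/-- The composition identity `φ_u = φ_w ∘ ψ` with explicit Möbius `ψ`. -/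
lemma psi_step {u w z : ℂ} (hu : Complex.abs u < 1) (hw : Complex.abs w < 1)
    (hz : Complex.abs z < 1) :
    phiM w ((((1 - w * (starRingEnd ℂ) u) / (1 - u * (starRingEnd ℂ) w)) * z
        + (u - w) / (1 - u * (starRingEnd ℂ) w)) /
      ((((starRingEnd ℂ) u - (starRingEnd ℂ) w) / (1 - u * (starRingEnd ℂ) w)) * z + 1))
      = phiM u z := by
  set cu := (starRingEnd ℂ) u with hcu
  set cw := (starRingEnd ℂ) w with hcw
  have hd : (1:ℂ) - u * cw ≠ 0 := one_sub_mul_conj_ne hu hw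
  set N := (1 - w * cu) * z + (u - w) with hN
  set E := (cu - cw) * z + (1 - u * cw) with hE
  have hEne : E ≠ 0 := psi_denom_ne hu hw hz
  have harg : (((1 - w * cu) / (1 - u * cw)) * z + (u - w) / (1 - u * cw)) /
      (((cu - cw) / (1 - u * cw)) * z + 1) = N / E := by
    rw [show ((1 - w * cu) / (1 - u * cw)) * z + (u - w) / (1 - u * cw) = N / (1 - u * cw) by
        rw [hN]; ring,
      show ((cu - cw) / (1 - u * cw)) * z + 1 = E / (1 - u * cw) by
        rw [hE, add_div, div_self hd]; ring,
      div_div_div_cancel_right₀ hd]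
  rw [harg]
  have hww : (1:ℂ) - w * cw ≠ 0 := one_sub_mul_conj_ne hw hw
  have hzu : (1:ℂ) + z * cu ≠ 0 := one_add_mul_conj_ne hz hu
  have key1 : N / E + w = (1 - w * cw) * (z + u) / E := by
    rw [eq_div_iff hEne, add_mul, div_mul_cancel₀ _ hEne, hN, hE]; ring
  have key2 : 1 + (N / E) * cw = (1 - w * cw) * (1 + z * cu) / E := by
    rw [eq_div_iff hEne, add_mul, one_mul, mul_assoc, mul_comm cw E, ← mul_assoc,
      div_mul_cancel₀ _ hEne, hN, hE]; ring
  have hY : (1 - w * cw) * (1 + z * cu) / E ≠ 0 :=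
    div_ne_zero (mul_ne_zero hww hzu) hEne
  rw [phiM, phiM, key1, key2, div_eq_div_iff hY hzu]
  field_simp

lemma frac_mono {p q ρ r : ℝ} (hp0 : 0 ≤ p) (hq0 : 0 ≤ q) (hpρ : p ≤ ρ) (hqr : q ≤ r)
    (hρ : ρ < 1) (hr : r < 1) : (p + q) / (1 + p * q) ≤ (ρ + r) / (1 + ρ * r) := by
  have h1 : (0:ℝ) < 1 + p * q := by nlinarith
  have h2 : (0:ℝ) < 1 + ρ * r := by nlinarith
  rw [div_le_div_iff₀ h1 h2]
  nlinarith [mul_nonneg (sub_nonneg.2 hpρ) (sub_nonneg.2 (le_of_lt (show q * r < 1 by nlinarith))),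
    mul_nonneg (sub_nonneg.2 hqr) (sub_nonneg.2 (le_of_lt (show ρ * p < 1 by nlinarith)))]

/-- |φ_b(z)|-type bound : |(z+b)/(1+z b̄)| ≤ (p+q)/(1+pq). -/
lemma mobius_abs_le {z b : ℂ} (hz : Complex.abs z < 1) (hb : Complex.abs b < 1) :
    Complex.abs ((z + b) / (1 + z * (starRingEnd ℂ) b)) ≤
      (Complex.abs z + Complex.abs b) / (1 + Complex.abs z * Complex.abs b) := by
  set p := Complex.abs z with hp
  set q := Complex.abs b with hq
  have hp0 : 0 ≤ p := AbsoluteValue.nonneg _ _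
  have hq0 : 0 ≤ q := AbsoluteValue.nonneg _ _
  have hpq : (0:ℝ) < 1 + p * q := by nlinarith
  set t := (z * (starRingEnd ℂ) b).re with ht
  have habs_t : t ≤ p * q := by
    have := Complex.re_le_abs (z * (starRingEnd ℂ) b)
    rwa [map_mul, Complex.abs_conj] at this
  have n1 : Complex.abs (z + b) ^ 2 = p^2 + q^2 + 2*t := by
    rw [Complex.sq_abs, Complex.normSq_add, ← Complex.sq_abs z, ← Complex.sq_abs b]
  have n2 : Complex.abs (1 + z * (starRingEnd ℂ) b) ^ 2 = 1 + p^2*q^2 + 2*t := by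
    rw [Complex.sq_abs, Complex.normSq_add]
    have hx : Complex.normSq (z * (starRingEnd ℂ) b) = p^2 * q^2 := by
      rw [← Complex.sq_abs, map_mul, Complex.abs_conj, mul_pow]
    rw [hx, Complex.normSq_one, one_mul, Complex.conj_re]
  have key_sq : (p^2+q^2+2*t) * (1+p*q)^2 ≤ (p+q)^2 * (1+p^2*q^2+2*t) := by
    nlinarith [mul_nonneg (mul_nonneg (sub_nonneg.2 habs_t)
      (sub_nonneg.2 (le_of_lt (show p^2 < 1 by nlinarith))))
      (sub_nonneg.2 (le_of_lt (show q^2 < 1 by nlinarith)))]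
  have hane : (1:ℂ) + z * (starRingEnd ℂ) b ≠ 0 := one_add_mul_conj_ne hz hb
  have hden_pos : 0 < Complex.abs (1 + z * (starRingEnd ℂ) b) := AbsoluteValue.pos _ hane
  have ha2 : (Complex.abs (z+b) * (1+p*q))^2
      ≤ ((p+q) * Complex.abs (1 + z * (starRingEnd ℂ) b))^2 := by
    rw [mul_pow, mul_pow, n1, n2]
    nlinarith [key_sq]
  have habs1 : Complex.abs (z+b) * (1+p*q) ≤ (p+q) * Complex.abs (1 + z * (starRingEnd ℂ) b) := by
    have h := Real.sqrt_le_sqrt ha2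
    rwa [Real.sqrt_sq (by positivity), Real.sqrt_sq (by positivity)] at h
  rw [map_div₀, div_le_div_iff₀ hden_pos hpq]
  exact habs1

/-- generic form : rotation times Möbius. -/
lemma rot_mobius_bound {A B C z : ℂ} {r ρ : ℝ}
    (hA1 : A * (starRingEnd ℂ) A = 1)
    (hCb : C = (starRingEnd ℂ) ((starRingEnd ℂ) A * B))
    (hB : Complex.abs B ≤ r) (hr1 : r < 1)
    (hz : Complex.abs z ≤ ρ) (hρ : ρ < 1) (hρ0 : 0 ≤ ρ) :
    Complex.abs ((A*z+B)/(C*z+1)) ≤ (ρ + r) / (1 + ρ * r) := by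
  have hr0 : 0 ≤ r := le_trans (AbsoluteValue.nonneg _ _) hB
  have habsA : Complex.abs A = 1 := by
    have h := congrArg Complex.abs hA1
    rw [map_mul, Complex.abs_conj, map_one] at h
    nlinarith [AbsoluteValue.nonneg Complex.abs A]
  set b := (starRingEnd ℂ) A * B with hbdef
  have habsb : Complex.abs b = Complex.abs B := by
    rw [hbdef, map_mul, Complex.abs_conj, habsA, one_mul]
  have hb1 : Complex.abs b < 1 := by rw [habsb]; exact lt_of_le_of_lt hB hr1
  have hz1 : Complex.abs z < 1 := lt_of_le_of_lt hz hρ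
  have hnum : A * (z + b) = A * z + B := by
    rw [hbdef]; linear_combination B * hA1
  have hform : (A * z + B) / (C * z + 1) = A * ((z + b) / (1 + z * (starRingEnd ℂ) b)) := by
    rw [hCb, ← hnum, mul_div_assoc]
    congr 1
    ring_nf
  calc Complex.abs ((A * z + B) / (C * z + 1))
      = Complex.abs ((z + b) / (1 + z * (starRingEnd ℂ) b)) := by
        rw [hform, map_mul, habsA, one_mul]
    _ ≤ (Complex.abs z + Complex.abs b) / (1 + Complex.abs z * Complex.abs b) :=
        mobius_abs_le hz1 hb1
    _ ≤ (ρ + r) / (1 + ρ * r) := by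
        apply frac_mono (AbsoluteValue.nonneg _ _) (AbsoluteValue.nonneg _ _) hz ?_ hρ hr1
        rw [habsb]; exact hB

lemma conj_ne {u w : ℂ} (hu : Complex.abs u < 1) (hw : Complex.abs w < 1) :
    (1:ℂ) - (starRingEnd ℂ) u * w ≠ 0 := by
  intro h
  apply one_sub_mul_conj_ne hu hw
  have := congrArg (starRingEnd ℂ) h
  simpa [map_sub, map_mul, mul_comm] using this

/-- A·Ā = 1 for the concrete rotation coefficient. -/
lemma concrete_hA1 {u w : ℂ} (hu : Complex.abs u < 1) (hw : Complex.abs w < 1) :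
    ((1 - w * (starRingEnd ℂ) u) / (1 - u * (starRingEnd ℂ) w)) *
      (starRingEnd ℂ) ((1 - w * (starRingEnd ℂ) u) / (1 - u * (starRingEnd ℂ) w)) = 1 := by
  have h1 := one_sub_mul_conj_ne hu hw
  have h2 := conj_ne hu hw
  have h3 := one_sub_mul_conj_ne hw hu
  have h4 := conj_ne hw hu
  simp only [map_div₀, map_sub, map_one, map_mul, Complex.conj_conj]
  field_simp

lemma concrete_hCb {u w : ℂ} (hu : Complex.abs u < 1) (hw : Complex.abs w < 1) :
    ((starRingEnd ℂ) u - (starRingEnd ℂ) w) / (1 - u * (starRingEnd ℂ) w) =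
      (starRingEnd ℂ) ((starRingEnd ℂ) ((1 - w * (starRingEnd ℂ) u) / (1 - u * (starRingEnd ℂ) w))
        * ((u - w) / (1 - u * (starRingEnd ℂ) w))) := by
  have h1 := one_sub_mul_conj_ne hu hw
  have h2 := conj_ne hu hw
  have h3 := one_sub_mul_conj_ne hw hu
  have h4 := conj_ne hw hu
  simp only [map_mul, map_div₀, map_sub, map_one, Complex.conj_conj]
  field_simp

/-- The bound on |ψ z|. -/
lemma psi_bound {u w z : ℂ} {r ρ : ℝ} (hu : Complex.abs u < 1) (hw : Complex.abs w < 1)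
    (hr : dph u w ≤ r) (hr1 : r < 1) (hz : Complex.abs z ≤ ρ) (hρ : ρ < 1) (hρ0 : 0 ≤ ρ) :
    Complex.abs ((((1 - w * (starRingEnd ℂ) u) / (1 - u * (starRingEnd ℂ) w)) * z
        + (u - w) / (1 - u * (starRingEnd ℂ) w)) /
      ((((starRingEnd ℂ) u - (starRingEnd ℂ) w) / (1 - u * (starRingEnd ℂ) w)) * z + 1))
      ≤ (ρ + r) / (1 + ρ * r) := by
  apply rot_mobius_bound (concrete_hA1 hu hw) (concrete_hCb hu hw) ?_ hr1 hz hρ hρ0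
  exact hr

/-- quantitative difference bound for two Möbius maps with close coefficients. -/
lemma psi_diff {A B C A' B' C' z : ℂ} {r : ℝ} (hr1 : r < 1) (hr0 : 0 ≤ r)
    (hC : Complex.abs C ≤ r) (hC' : Complex.abs C' ≤ r)
    (hA' : Complex.abs A' ≤ 1) (hB' : Complex.abs B' ≤ r) (hz : Complex.abs z ≤ 1) :
    Complex.abs ((A*z+B)/(C*z+1) - (A'*z+B')/(C'*z+1)) ≤
      (2*(Complex.abs (A-A') + Complex.abs (B-B')) + 2*Complex.abs (C-C')) / ((1-r)*(1-r)) := by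
  have habsCz : Complex.abs (C*z) ≤ r := by
    rw [map_mul]
    calc Complex.abs C * Complex.abs z ≤ r * 1 :=
      mul_le_mul hC hz (AbsoluteValue.nonneg _ _) hr0
    _ = r := mul_one r
  have habsCz' : Complex.abs (C'*z) ≤ r := by
    rw [map_mul]
    calc Complex.abs C' * Complex.abs z ≤ r * 1 :=
      mul_le_mul hC' hz (AbsoluteValue.nonneg _ _) hr0
    _ = r := mul_one r
  have hden : 1 - r ≤ Complex.abs (C*z+1) := by
    have h := AbsoluteValue.add_le Complex.abs (C*z+1) (-(C*z))
    rw [show (C*z+1) + -(C*z) = 1 by ring, map_one, map_neg_eq_map] at h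
    linarith [habsCz, h]
  have hden' : 1 - r ≤ Complex.abs (C'*z+1) := by
    have h := AbsoluteValue.add_le Complex.abs (C'*z+1) (-(C'*z))
    rw [show (C'*z+1) + -(C'*z) = 1 by ring, map_one, map_neg_eq_map] at h
    linarith [habsCz', h]
  have hdpos : (0:ℝ) < Complex.abs (C*z+1) := lt_of_lt_of_le (by linarith) hden
  have hdpos' : (0:ℝ) < Complex.abs (C'*z+1) := lt_of_lt_of_le (by linarith) hden'
  have hne : C*z+1 ≠ 0 := fun h => by rw [h] at hdpos; simp at hdpos
  have hne' : C'*z+1 ≠ 0 := fun h => by rw [h] at hdpos'; simp at hdpos'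
  rw [div_sub_div _ _ hne hne', map_div₀, map_mul]
  have hnum : Complex.abs ((A*z+B)*(C'*z+1) - (C*z+1)*(A'*z+B')) ≤
      2*(Complex.abs (A-A') + Complex.abs (B-B')) + 2*Complex.abs (C-C') := by
    have hid : (A*z+B)*(C'*z+1) - (C*z+1)*(A'*z+B')
        = ((A-A')*z + (B-B'))*(C'*z+1) + (A'*z+B')*((C'-C)*z) := by ring
    rw [hid]
    have e1 : Complex.abs (((A-A')*z + (B-B'))*(C'*z+1)) ≤
        (Complex.abs (A-A') + Complex.abs (B-B')) * 2 := by
      rw [map_mul]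
      have f1 : Complex.abs ((A-A')*z + (B-B')) ≤ Complex.abs (A-A') + Complex.abs (B-B') := by
        calc Complex.abs ((A-A')*z + (B-B')) ≤ Complex.abs ((A-A')*z) + Complex.abs (B-B') :=
              AbsoluteValue.add_le _ _ _
          _ ≤ Complex.abs (A-A') + Complex.abs (B-B') := by
              rw [map_mul]
              nlinarith [AbsoluteValue.nonneg Complex.abs (A-A'), hz,
                AbsoluteValue.nonneg Complex.abs z]
      have f2 : Complex.abs (C'*z+1) ≤ 2 := by
        calc Complex.abs (C'*z+1) ≤ Complex.abs (C'*z) + Complex.abs 1 :=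
            AbsoluteValue.add_le _ _ _
          _ ≤ 2 := by rw [map_one]; linarith [habsCz']
      exact mul_le_mul f1 f2 (AbsoluteValue.nonneg _ _) (by positivity)
    have e2 : Complex.abs ((A'*z+B')*((C'-C)*z)) ≤ 2*Complex.abs (C-C') := by
      rw [map_mul, map_mul]
      have f3 : Complex.abs (A'*z+B') ≤ 2 := by
        calc Complex.abs (A'*z+B') ≤ Complex.abs (A'*z) + Complex.abs B' :=
            AbsoluteValue.add_le _ _ _
          _ ≤ 2 := by
            rw [map_mul]
            nlinarith [AbsoluteValue.nonneg Complex.abs A', AbsoluteValue.nonneg Complex.abs z]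
      have f4 : Complex.abs (C'-C) = Complex.abs (C-C') := AbsoluteValue.map_sub _ _ _
      have f5 : Complex.abs (C'-C) * Complex.abs z ≤ Complex.abs (C-C') := by
        rw [f4]
        nlinarith [AbsoluteValue.nonneg Complex.abs (C-C'), hz,
          AbsoluteValue.nonneg Complex.abs z]
      nlinarith [AbsoluteValue.nonneg Complex.abs (A'*z+B'), f3, f5,
        mul_nonneg (AbsoluteValue.nonneg Complex.abs (C'-C))
          (AbsoluteValue.nonneg Complex.abs z),
        AbsoluteValue.nonneg Complex.abs (C-C')]
    calc Complex.abs (((A-A')*z + (B-B'))*(C'*z+1) + (A'*z+B')*((C'-C)*z))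
        ≤ Complex.abs (((A-A')*z + (B-B'))*(C'*z+1)) + Complex.abs ((A'*z+B')*((C'-C)*z)) :=
          AbsoluteValue.add_le _ _ _
      _ ≤ 2*(Complex.abs (A-A') + Complex.abs (B-B')) + 2*Complex.abs (C-C') := by
          linarith [e1, e2]
  apply div_le_div₀ (by positivity) hnum (by nlinarith)
  calc (1-r)*(1-r) ≤ Complex.abs (C*z+1) * Complex.abs (C'*z+1) :=
    mul_le_mul hden hden' (by linarith) (le_of_lt hdpos)

end MobAux

lemma MobAux.abs_eq_one_of_mul_conj {A : ℂ} (h : A * (starRingEnd ℂ) A = 1) :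
    Complex.abs A = 1 := by
  have h2 := congrArg Complex.abs h
  rw [map_mul, Complex.abs_conj, map_one] at h2
  nlinarith [AbsoluteValue.nonneg Complex.abs A]

lemma SimpleCurve.carrier_subset_unitDisc {p : ℂ} (γ : SimpleCurve p) :
    γ.carrier ⊆ unitDisc := by
  rintro x ⟨t, ht, rfl⟩
  exact γ.inDisc t ht

namespace MainAux
open SphAux MobAux

open SphAux MobAux

/-- Heine–Cantor by hand for sphDist-valued maps. -/
lemma uc_of_scont (G : ℂ → OnePoint ℂ) (s : Set ℂ) (hs : IsCompact s)
    (hG : ∀ z ∈ s, ∀ ε > 0, ∃ δ > 0, ∀ y : ℂ,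
      Complex.abs (y - z) < δ → sphDist (G y) (G z) < ε) :
    ∀ ε > 0, ∃ δ > 0, ∀ x ∈ s, ∀ y ∈ s,
      Complex.abs (x - y) < δ → sphDist (G x) (G y) < ε := by
  intro ε hε
  by_contra hcon
  push_neg at hcon
  have hseq : ∀ k : ℕ, ∃ x ∈ s, ∃ y ∈ s,
      Complex.abs (x - y) < 1/(k+1) ∧ ε ≤ sphDist (G x) (G y) := by
    intro k
    obtain ⟨x, hx, y, hy, hxy, hd⟩ := hcon (1/(k+1)) (by positivity)
    exact ⟨x, hx, y, hy, hxy, hd⟩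
  choose x hxs y hys hxy hd using hseq
  obtain ⟨x₀, hx₀s, φ, hφ, hxconv⟩ := hs.tendsto_subseq hxs
  obtain ⟨δ, hδ, hδp⟩ := hG x₀ hx₀s (ε/2) (by linarith)
  obtain ⟨N₁, hN₁⟩ := (Metric.tendsto_atTop.1 hxconv) (δ/2) (by linarith)
  obtain ⟨n₀, hn₀⟩ := exists_nat_one_div_lt (show (0:ℝ) < δ/2 by linarith)
  set k := max N₁ n₀ with hk
  have hkN₁ : N₁ ≤ k := le_max_left _ _
  have h1 : dist (x (φ k)) x₀ < δ/2 := hN₁ k hkN₁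
  have hφk : (k:ℝ) + 1 ≤ (φ k : ℝ) + 1 := by
    have hle : k ≤ φ k := hφ.le_apply
    push_cast
    have : (k:ℝ) ≤ (φ k : ℝ) := by exact_mod_cast hle
    linarith
  have h2 : (1:ℝ)/(φ k + 1) < δ/2 := by
    have hk' : (1:ℝ)/(k+1) < δ/2 := by
      have hn₀' : (1:ℝ)/(n₀+1) < δ/2 := hn₀
      have : (1:ℝ)/(k+1) ≤ 1/(n₀+1) := by
        apply div_le_div_of_nonneg_left (by norm_num) (by positivity)
        have : (n₀:ℝ) ≤ k := by exact_mod_cast le_max_right N₁ n₀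
        linarith
      linarith
    have : (1:ℝ)/((φ k : ℝ)+1) ≤ 1/((k:ℝ)+1) := by
      apply div_le_div_of_nonneg_left (by norm_num) (by positivity) hφk
    linarith
  have h1' : Complex.abs (x (φ k) - x₀) < δ/2 := by rwa [Complex.dist_eq] at h1
  have hx1 : Complex.abs (x (φ k) - x₀) < δ := by linarith
  have hy1 : Complex.abs (y (φ k) - x₀) < δ := by
    have tri : Complex.abs (y (φ k) - x₀) ≤
        Complex.abs (y (φ k) - x (φ k)) + Complex.abs (x (φ k) - x₀) := by
      have := AbsoluteValue.add_le Complex.abs (y (φ k) - x (φ k)) (x (φ k) - x₀)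
      rw [show y (φ k) - x (φ k) + (x (φ k) - x₀) = y (φ k) - x₀ by ring] at this
      exact this
    have hxy' : Complex.abs (y (φ k) - x (φ k)) < 1/(φ k + 1) := by
      rw [AbsoluteValue.map_sub]
      exact hxy (φ k)
    linarith [tri, hxy', h2, h1']
  have hcontr : sphDist (G (x (φ k))) (G (y (φ k))) < ε := by
    calc sphDist (G (x (φ k))) (G (y (φ k)))
        ≤ sphDist (G (x (φ k))) (G x₀) + sphDist (G x₀) (G (y (φ k))) :=
          sph_triangle _ _ _
      _ < ε/2 + ε/2 := by
          have e1 := hδp _ hx1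
          have e2 := hδp _ hy1
          rw [sph_comm (G x₀) (G (y (φ k)))]
          exact add_lt_add e1 e2
      _ = ε := by ring
  exact absurd hcontr (not_lt.2 (hd (φ k)))

/-- SCont composes with the Möbius map. -/
lemma scont_comp_phiM {F : ℂ → OnePoint ℂ} {v z : ℂ} (hv : Complex.abs v < 1)
    (hz : Complex.abs z < 1) (hF : SphAux.SCont F (phiM v z)) :
    ∀ ε > 0, ∃ δ > 0, ∀ y : ℂ, Complex.abs (y - z) < δ →
      sphDist (F (phiM v y)) (F (phiM v z)) < ε := by
  intro ε hε
  obtain ⟨δ₁, hδ₁, h₁⟩ := hF ε hε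
  have hc : ContinuousAt (phiM v) z := by
    apply ContinuousAt.div
    · fun_prop
    · fun_prop
    · exact one_add_mul_conj_ne hz hv
  obtain ⟨δ₂, hδ₂, h₂⟩ := Metric.continuousAt_iff.1 hc δ₁ hδ₁
  refine ⟨δ₂, hδ₂, fun y hy => ?_⟩
  apply h₁
  have := h₂ (show dist y z < δ₂ by rw [Complex.dist_eq]; exact hy)
  rw [Complex.dist_eq] at this
  exact this

/-- The main transport lemma. -/
lemma transport {f : ℂ → ℂ}
    (hcont : ∀ z ∈ unitDisc, SphAux.SCont (toSphere f) z)
    {γc : Set ℂ} (hγc : γc ⊆ unitDisc)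
    (hN : NormalAlong (toSphere f) γc unitDisc)
    {γ₁c : Set ℂ} {r : ℝ} (hr0 : 0 < r) (hr1 : r < 1)
    (hsub : γ₁c ⊆ Delta r γc) :
    NormalAlong (toSphere f) γ₁c unitDisc := by
  intro u hu
  have hchoice : ∀ n, ∃ w, w ∈ γc ∧ u n ∈ unitDisc ∧ dph (u n) w ≤ r := by
    intro n
    have hmem := hsub (hu n)
    simp only [Delta, mem_iUnion, exists_prop, mem_setOf_eq, mem_sep_iff] at hmem
    obtain ⟨w, hw, hd1, hd2⟩ := hmem
    exact ⟨w, hw, hd1, hd2⟩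
  choose w hwγ hudisc hdph using hchoice
  have hwd : ∀ n, Complex.abs (w n) < 1 := fun n => hγc (hwγ n)
  have hud : ∀ n, Complex.abs (u n) < 1 := fun n => hudisc n
  obtain ⟨σ₁, hσ₁, h, hconv⟩ := hN w hwγ
  set A : ℕ → ℂ := fun n =>
    (1 - w (σ₁ n) * (starRingEnd ℂ) (u (σ₁ n))) /
    (1 - u (σ₁ n) * (starRingEnd ℂ) (w (σ₁ n))) with hAdef
  set B : ℕ → ℂ := fun n =>
    (u (σ₁ n) - w (σ₁ n)) / (1 - u (σ₁ n) * (starRingEnd ℂ) (w (σ₁ n))) with hBdef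
  set C : ℕ → ℂ := fun n =>
    ((starRingEnd ℂ) (u (σ₁ n)) - (starRingEnd ℂ) (w (σ₁ n))) /
    (1 - u (σ₁ n) * (starRingEnd ℂ) (w (σ₁ n))) with hCdef
  have hA1 : ∀ n, Complex.abs (A n) = 1 := fun n =>
    abs_eq_one_of_mul_conj (concrete_hA1 (hud (σ₁ n)) (hwd (σ₁ n)))
  have hB1 : ∀ n, Complex.abs (B n) ≤ r := fun n => hdph (σ₁ n)
  have hC1 : ∀ n, Complex.abs (C n) ≤ r := by
    intro n
    have : Complex.abs (C n) = Complex.abs (B n) := by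
      rw [hCdef, hBdef]
      simp only [map_div₀]
      congr 1
      rw [← map_sub, Complex.abs_conj]
    rw [this]; exact hB1 n
  -- compactness of coefficients
  set T : ℕ → ℂ × ℂ × ℂ := fun n => (A n, B n, C n) with hTdef
  have hTS : ∀ n, T n ∈ (Metric.closedBall (0:ℂ) 1) ×ˢ
      ((Metric.closedBall (0:ℂ) r) ×ˢ (Metric.closedBall (0:ℂ) r)) := by
    intro n
    refine ⟨?_, ?_, ?_⟩ <;>
      simp only [mem_closedBall_zero_iff, Complex.norm_eq_abs]
    · rw [hA1 n]
    · exact hB1 n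
    · exact hC1 n
  have hScomp : IsCompact ((Metric.closedBall (0:ℂ) 1) ×ˢ
      ((Metric.closedBall (0:ℂ) r) ×ˢ (Metric.closedBall (0:ℂ) r))) :=
    (isCompact_closedBall _ _).prod
      ((isCompact_closedBall _ _).prod (isCompact_closedBall _ _))
  obtain ⟨L, hLmem, σ₂, hσ₂, hT⟩ := hScomp.tendsto_subseq hTS
  obtain ⟨Ai, Bi, Ci⟩ := L
  have hAi : Complex.abs Ai ≤ 1 := by
    have := hLmem.1
    simpa [mem_closedBall_zero_iff, Complex.norm_eq_abs] using this
  have hBi : Complex.abs Bi ≤ r := by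
    have := hLmem.2.1
    simpa [mem_closedBall_zero_iff, Complex.norm_eq_abs] using this
  have hCi : Complex.abs Ci ≤ r := by
    have := hLmem.2.2
    simpa [mem_closedBall_zero_iff, Complex.norm_eq_abs] using this
  have hTA : Tendsto (fun n => A (σ₂ n)) atTop (𝓝 Ai) :=
    (continuous_fst.tendsto _).comp hT
  have hTB : Tendsto (fun n => B (σ₂ n)) atTop (𝓝 Bi) :=
    (continuous_fst.tendsto _).comp ((continuous_snd.tendsto _).comp hT)
  have hTC : Tendsto (fun n => C (σ₂ n)) atTop (𝓝 Ci) :=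
    (continuous_snd.tendsto _).comp ((continuous_snd.tendsto _).comp hT)
  refine ⟨σ₁ ∘ σ₂, hσ₁.comp hσ₂, fun z => h ((Ai*z+Bi)/(Ci*z+1)), ?_⟩
  intro K hKU hKc ε hε
  -- radius of K
  obtain ⟨ρ, hρ0, hρ1, hρK⟩ : ∃ ρ, 0 ≤ ρ ∧ ρ < 1 ∧ ∀ z ∈ K, Complex.abs z ≤ ρ := by
    rcases K.eq_empty_or_nonempty with hKe | hKne
    · exact ⟨0, le_refl 0, one_pos, by simp [hKe]⟩
    · obtain ⟨z₀, hz₀K, hz₀max⟩ := hKc.exists_isMaxOn hKne Complex.continuous_abs.continuousOn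
      exact ⟨Complex.abs z₀, AbsoluteValue.nonneg _ _, hKU hz₀K, fun z hz => hz₀max hz⟩
  set ρ' := (ρ + r)/(1 + ρ*r) with hρ'def
  have hρ'0 : 0 ≤ ρ' := by positivity
  have hρ'1 : ρ' < 1 := by
    rw [hρ'def, div_lt_one (by nlinarith)]
    nlinarith
  set ρ'' := (ρ' + 1)/2 with hρ''def
  have hρ''0 : 0 ≤ ρ'' := by positivity
  have hρ''1 : ρ'' < 1 := by rw [hρ''def]; linarith
  have hρ'ρ'' : ρ' ≤ ρ'' := by rw [hρ''def]; linarith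
  set K' : Set ℂ := Metric.closedBall (0:ℂ) ρ' with hK'def
  set K'' : Set ℂ := Metric.closedBall (0:ℂ) ρ'' with hK''def
  have hK'U : K' ⊆ unitDisc := by
    intro x hx
    have : Complex.abs x ≤ ρ' := by
      simpa [hK'def, mem_closedBall_zero_iff, Complex.norm_eq_abs] using hx
    exact lt_of_le_of_lt this hρ'1
  have hK''U : K'' ⊆ unitDisc := by
    intro x hx
    have : Complex.abs x ≤ ρ'' := by
      simpa [hK''def, mem_closedBall_zero_iff, Complex.norm_eq_abs] using hx
    exact lt_of_le_of_lt this hρ''1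
  have hK'K'' : K' ⊆ K'' := Metric.closedBall_subset_closedBall hρ'ρ''
  -- per-n membership of ψ n z in K'
  have hψmem : ∀ n (z : ℂ), Complex.abs z ≤ ρ →
      Complex.abs ((A (σ₂ n) * z + B (σ₂ n))/(C (σ₂ n) * z + 1)) ≤ ρ' := by
    intro n z hz
    exact psi_bound (hud (σ₁ (σ₂ n))) (hwd (σ₁ (σ₂ n))) (hdph (σ₁ (σ₂ n))) hr1 hz hρ1 hρ0
  have hCine : ∀ z : ℂ, Complex.abs z ≤ ρ → Ci * z + 1 ≠ 0 := by
    intro z hz hzero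
    have h1 : Complex.abs (Ci * z) ≤ r * ρ := by
      rw [map_mul]
      exact mul_le_mul hCi hz (AbsoluteValue.nonneg _ _) (by linarith)
    have h2 : Ci * z = -1 := by linear_combination hzero
    rw [h2] at h1
    simp only [map_neg_eq_map, map_one] at h1
    nlinarith
  have hpsiImem : ∀ z : ℂ, Complex.abs z ≤ ρ → Complex.abs ((Ai*z+Bi)/(Ci*z+1)) ≤ ρ' := by
    intro z hz
    have htend : Tendsto (fun n => (A (σ₂ n) * z + B (σ₂ n))/(C (σ₂ n) * z + 1))
        atTop (𝓝 ((Ai*z+Bi)/(Ci*z+1))) := by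
      apply Tendsto.div
      · exact (hTA.mul tendsto_const_nhds).add hTB
      · exact (hTC.mul tendsto_const_nhds).add tendsto_const_nhds
      · exact hCine z hz
    have habs : Tendsto (fun n => Complex.abs ((A (σ₂ n) * z + B (σ₂ n))/(C (σ₂ n) * z + 1)))
        atTop (𝓝 (Complex.abs ((Ai*z+Bi)/(Ci*z+1)))) :=
      (Complex.continuous_abs.tendsto _).comp htend
    exact le_of_tendsto habs (Filter.Eventually.of_forall (fun n => hψmem n z hz))
  -- uniform continuity of h on K''
  have hK''c : IsCompact K'' := isCompact_closedBall _ _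
  obtain ⟨N₀, hN₀⟩ := hconv K'' hK''U hK''c (ε/8) (by linarith)
  have hfact5 : ∃ δ > 0, ∀ x ∈ K'', ∀ y ∈ K'',
      Complex.abs (x - y) < δ → sphDist (h x) (h y) < ε/2 := by
    set G : ℂ → OnePoint ℂ := fun y => toSphere f (phiM (w (σ₁ N₀)) y) with hGdef
    have hGscont : ∀ z ∈ K'', ∀ ε' > 0, ∃ δ > 0, ∀ y : ℂ,
        Complex.abs (y - z) < δ → sphDist (G y) (G z) < ε' := by
      intro z hzK ε' hε'
      have hz1 : Complex.abs z < 1 := hK''U hzK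
      exact scont_comp_phiM (hwd (σ₁ N₀)) hz1
        (hcont _ (phiM_mem (hwd (σ₁ N₀)) hz1)) ε' hε'
    obtain ⟨δ, hδ, hδp⟩ := uc_of_scont G K'' hK''c hGscont (ε/4) (by linarith)
    refine ⟨δ, hδ, fun x hx y hy hxy => ?_⟩
    have e1 : sphDist (G x) (h x) < ε/8 := hN₀ N₀ (le_refl _) x hx
    have e2 : sphDist (G y) (h y) < ε/8 := hN₀ N₀ (le_refl _) y hy
    have e3 : sphDist (G x) (G y) < ε/4 := hδp x hx y hy hxy
    calc sphDist (h x) (h y) ≤ sphDist (h x) (G x) + sphDist (G x) (h y) :=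
          sph_triangle _ _ _
      _ ≤ sphDist (h x) (G x) + (sphDist (G x) (G y) + sphDist (G y) (h y)) := by
          linarith [sph_triangle (G x) (G y) (h y)]
      _ < ε/8 + (ε/4 + ε/8) := by
          rw [sph_comm (h x) (G x)]
          linarith [e1, e3, e2]
      _ = ε/2 := by ring
  obtain ⟨δ, hδ, hδp⟩ := hfact5
  -- convergence indices
  obtain ⟨N₁, hN₁⟩ := hconv K' hK'U (isCompact_closedBall _ _) (ε/2) (by linarith)
  set η := δ * (1-r) * (1-r) / 7 with hηdef
  have hη : 0 < η := by
    have : (0:ℝ) < 1 - r := by linarith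
    positivity
  obtain ⟨NA, hNA⟩ := (Metric.tendsto_atTop.1 hTA) η hη
  obtain ⟨NB, hNB⟩ := (Metric.tendsto_atTop.1 hTB) η hη
  obtain ⟨NC, hNC⟩ := (Metric.tendsto_atTop.1 hTC) η hη
  refine ⟨max N₁ (max NA (max NB NC)), ?_⟩
  intro n hn z hzK
  have hzρ : Complex.abs z ≤ ρ := hρK z hzK
  have hz1 : Complex.abs z < 1 := lt_of_le_of_lt hzρ hρ1
  have hnN₁ : N₁ ≤ σ₂ n := le_trans (le_trans (le_max_left _ _) hn) hσ₂.le_apply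
  have hnA : NA ≤ n := le_trans (le_trans (le_max_left NA _) (le_max_right N₁ _)) hn
  have hnB : NB ≤ n :=
    le_trans (le_trans (le_trans (le_max_left NB NC) (le_max_right NA _)) (le_max_right N₁ _)) hn
  have hnC : NC ≤ n :=
    le_trans (le_trans (le_trans (le_max_right NB NC) (le_max_right NA _)) (le_max_right N₁ _)) hn
  -- the step identity
  have hstep : phiM (u (σ₁ (σ₂ n))) z
      = phiM (w (σ₁ (σ₂ n))) ((A (σ₂ n) * z + B (σ₂ n))/(C (σ₂ n) * z + 1)) :=
    (psi_step (hud (σ₁ (σ₂ n))) (hwd (σ₁ (σ₂ n))) hz1).symm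
  set ψn := (A (σ₂ n) * z + B (σ₂ n))/(C (σ₂ n) * z + 1) with hψndef
  set psiI := (Ai*z+Bi)/(Ci*z+1) with hpsiIdef
  have hψnK' : ψn ∈ K' := by
    simp only [hK'def, mem_closedBall_zero_iff, Complex.norm_eq_abs]
    exact hψmem n z hzρ
  have hpsiIK' : psiI ∈ K' := by
    simp only [hK'def, mem_closedBall_zero_iff, Complex.norm_eq_abs]
    exact hpsiImem z hzρ
  have hterm1 : sphDist (toSphere f (phiM (u ((σ₁ ∘ σ₂) n)) z)) (h ψn) < ε/2 := by
    show sphDist (toSphere f (phiM (u (σ₁ (σ₂ n))) z)) (h ψn) < ε/2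
    rw [hstep]
    exact hN₁ (σ₂ n) hnN₁ ψn hψnK'
  have hdiff : Complex.abs (ψn - psiI) < δ := by
    have hbound := psi_diff (A := A (σ₂ n)) (B := B (σ₂ n)) (C := C (σ₂ n))
      (A' := Ai) (B' := Bi) (C' := Ci) (z := z) hr1 (le_of_lt hr0)
      (hC1 (σ₂ n)) hCi hAi hBi (le_of_lt hz1)
    have hda : Complex.abs (A (σ₂ n) - Ai) < η := by
      have := hNA n hnA
      rwa [Complex.dist_eq] at this
    have hdb : Complex.abs (B (σ₂ n) - Bi) < η := by
      have := hNB n hnB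
      rwa [Complex.dist_eq] at this
    have hdc : Complex.abs (C (σ₂ n) - Ci) < η := by
      have := hNC n hnC
      rwa [Complex.dist_eq] at this
    have hrr : (0:ℝ) < (1-r)*(1-r) := by nlinarith
    calc Complex.abs (ψn - psiI)
        ≤ (2*(Complex.abs (A (σ₂ n) - Ai) + Complex.abs (B (σ₂ n) - Bi))
            + 2*Complex.abs (C (σ₂ n) - Ci)) / ((1-r)*(1-r)) := hbound
      _ < (2*(η + η) + 2*η) / ((1-r)*(1-r)) := by
          apply (div_lt_div_iff_of_pos_right hrr).2
          linarith
      _ = 6*η / ((1-r)*(1-r)) := by ring_nf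
      _ < δ := by
          rw [hηdef]
          rw [div_lt_iff₀ hrr]
          nlinarith [hδ, hrr]
  have hterm2 : sphDist (h ψn) (h psiI) < ε/2 :=
    hδp ψn (hK'K'' hψnK') psiI (hK'K'' hpsiIK') hdiff
  calc sphDist (toSphere f (phiM (u ((σ₁ ∘ σ₂) n)) z)) (h psiI)
      ≤ sphDist (toSphere f (phiM (u ((σ₁ ∘ σ₂) n)) z)) (h ψn) + sphDist (h ψn) (h psiI) :=
        sph_triangle _ _ _
    _ < ε/2 + ε/2 := add_lt_add hterm1 hterm2
    _ = ε := by ring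

open SphAux MobAux

lemma not_normal_of_fake {f : ℂ → ℂ} {p : ℂ} (γ : SimpleCurve p)
    {s : ℂ} (hs : s ∈ unitDisc) (hna : ¬ AnalyticAt ℂ f s)
    {g : ℂ → ℂ} (hg : AnalyticAt ℂ g s) (hfg : f =ᶠ[𝓝[≠] s] g) :
    ¬ NormalAlong (toSphere f) γ.carrier unitDisc := by
  intro hN
  have hsd : Complex.abs s < 1 := hs
  -- a strictly monotone parameter sequence tending to 1/2
  set t : ℕ → ℝ := fun n => 1/2 - 1/(n+4) with htdef
  have ht4 : ∀ n : ℕ, (0:ℝ) < (n:ℝ) + 4 := fun n => by positivity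
  have htlt : ∀ n : ℕ, (1:ℝ)/((n:ℝ)+4) ≤ 1/4 := by
    intro n
    apply div_le_div_of_nonneg_left (by norm_num) (by norm_num)
    have : (0:ℝ) ≤ (n:ℝ) := Nat.cast_nonneg n
    linarith
  have htmem : ∀ n, t n ∈ Set.Ico (0:ℝ) 1 := by
    intro n
    have h1 := htlt n
    have h2 : (0:ℝ) < 1/((n:ℝ)+4) := by positivity
    constructor
    · simp only [htdef]; linarith
    · simp only [htdef]; linarith
  have htlt12 : ∀ n, t n < 1/2 := by
    intro n
    have h2 : (0:ℝ) < 1/((n:ℝ)+4) := by positivity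
    simp only [htdef]; linarith
  set w : ℕ → ℂ := fun n => γ.toFun (t n) with hwdef
  have hwγ : ∀ n, w n ∈ γ.carrier := fun n => ⟨t n, htmem n, rfl⟩
  have hwd : ∀ n, Complex.abs (w n) < 1 := fun n => γ.inDisc _ (htmem n)
  have h12 : (1/2 : ℝ) ∈ Set.Ico (0:ℝ) 1 := by norm_num
  set wst : ℂ := γ.toFun (1/2) with hwstdef
  have hwstd : Complex.abs wst < 1 := γ.inDisc _ h12
  have hwne : ∀ n, w n ≠ wst := by
    intro n hEq
    have := γ.inj (htmem n) h12 hEq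
    exact absurd this (ne_of_lt (htlt12 n))
  have hwlim : Tendsto w atTop (𝓝 wst) := by
    have ht0 : Tendsto (fun n : ℕ => 1/((n:ℝ)+4)) atTop (𝓝 0) := by
      simp only [one_div]
      exact Tendsto.comp tendsto_inv_atTop_zero
        (tendsto_atTop_add_const_right _ 4 tendsto_natCast_atTop_atTop)
    have ht2 : Tendsto t atTop (𝓝 (1/2)) := by
      have h' : Tendsto (fun n : ℕ => 1/2 - 1/((n:ℝ)+4)) atTop (𝓝 (1/2 - 0)) :=
        tendsto_const_nhds.sub ht0
      rw [sub_zero] at h'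
      exact h'
    have hmap : Tendsto t atTop (𝓝[Set.Ico (0:ℝ) 1] (1/2)) :=
      tendsto_nhdsWithin_iff.2 ⟨ht2, Eventually.of_forall htmem⟩
    exact (γ.cont _ h12).tendsto.comp hmap
  obtain ⟨σ, hσ, h, hconv⟩ := hN w hwγ
  set v : ℕ → ℂ := fun n => w (σ n) with hvdef
  have hvd : ∀ n, Complex.abs (v n) < 1 := fun n => hwd (σ n)
  have hvne : ∀ n, v n ≠ wst := fun n => hwne (σ n)
  have hvlim : Tendsto v atTop (𝓝 wst) := hwlim.comp hσ.tendsto_atTop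
  set q : ℕ → ℂ := fun n => (s - v n) / (1 - s * (starRingEnd ℂ) (v n)) with hqdef
  set qst : ℂ := (s - wst) / (1 - s * (starRingEnd ℂ) wst) with hqstdef
  have hqst1 : Complex.abs qst < 1 := dph_lt_one hsd hwstd
  have hconjv : Tendsto (fun n => (starRingEnd ℂ) (v n)) atTop (𝓝 ((starRingEnd ℂ) wst)) :=
    (Complex.continuous_conj.tendsto _).comp hvlim
  have hqlim : Tendsto q atTop (𝓝 qst) := by
    apply Tendsto.div
    · exact tendsto_const_nhds.sub hvlim
    · exact tendsto_const_nhds.sub (tendsto_const_nhds.mul hconjv)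
    · exact one_sub_mul_conj_ne hsd hwstd
  set ρ := (Complex.abs qst + 1)/2 with hρdef
  have hρ1 : ρ < 1 := by rw [hρdef]; linarith
  have hρ0 : 0 ≤ ρ := by
    rw [hρdef]
    have := AbsoluteValue.nonneg Complex.abs qst
    linarith
  set K : Set ℂ := Metric.closedBall (0:ℂ) ρ with hKdef
  have hKU : K ⊆ unitDisc := by
    intro x hx
    have : Complex.abs x ≤ ρ := by
      simpa [hKdef, mem_closedBall_zero_iff, Complex.norm_eq_abs] using hx
    exact lt_of_le_of_lt this hρ1
  set M := Complex.abs (g s) + 1 with hMdef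
  have hM1 : 1 ≤ M := by
    rw [hMdef]; have := AbsoluteValue.nonneg Complex.abs (g s); linarith
  obtain ⟨δ₁, hδ₁, hp₁⟩ := Metric.continuousAt_iff.1 hg.continuousAt 1 one_pos
  obtain ⟨δ₂, hδ₂, hp₂⟩ := Metric.eventually_nhds_iff.1 (eventually_nhdsWithin_iff.1 hfg)
  obtain ⟨δ₃, hδ₃, hp₃⟩ := Metric.eventually_nhds_iff.1 hg.eventually_analyticAt
  set δ := min δ₁ (min δ₂ δ₃) with hδdef
  have hδ0 : 0 < δ := lt_min hδ₁ (lt_min hδ₂ hδ₃)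
  have key : ∀ y : ℂ, Complex.abs (y - s) < δ → y ≠ s →
      toSphere f y = Option.some (g y) ∧ Complex.abs (g y) ≤ M := by
    intro y hy hyne
    have hyd1 : dist y s < δ₁ := by
      rw [Complex.dist_eq]; exact lt_of_lt_of_le hy (min_le_left _ _)
    have hyd2 : dist y s < δ₂ := by
      rw [Complex.dist_eq]
      exact lt_of_lt_of_le hy ((min_le_right _ _).trans (min_le_left _ _))
    have hyd3 : dist y s < δ₃ := by
      rw [Complex.dist_eq]
      exact lt_of_lt_of_le hy ((min_le_right _ _).trans (min_le_right _ _))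
    have hyabs : 0 < Complex.abs (y - s) := AbsoluteValue.pos _ (sub_ne_zero_of_ne hyne)
    -- f = g on a neighbourhood of y
    have hfgy : f =ᶠ[𝓝 y] g := by
      apply Metric.eventually_nhds_iff.2
      refine ⟨min (δ₂ - dist y s) (Complex.abs (y - s)), by
        apply lt_min
        · linarith
        · exact hyabs, ?_⟩
      intro x hx
      have hx1 : dist x y < δ₂ - dist y s := lt_of_lt_of_le hx (min_le_left _ _)
      have hx2 : dist x y < Complex.abs (y - s) := lt_of_lt_of_le hx (min_le_right _ _)
      have hxs : dist x s < δ₂ := by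
        calc dist x s ≤ dist x y + dist y s := dist_triangle _ _ _
          _ < δ₂ := by linarith
      have hxne : x ≠ s := by
        intro hEq
        rw [hEq] at hx2
        rw [Complex.dist_eq, AbsoluteValue.map_sub] at hx2
        exact absurd hx2 (lt_irrefl _)
      exact hp₂ hxs (by simp [hxne])
    have hay : AnalyticAt ℂ f y := (hp₃ hyd3).congr hfgy.symm
    have hfy : f y = g y := hp₂ hyd2 (by simp [hyne])
    refine ⟨by rw [toSphere_eq_some hay, hfy], ?_⟩
    have := hp₁ hyd1
    rw [Complex.dist_eq, Complex.norm_eq_abs] at this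
    have htr := AbsoluteValue.add_le Complex.abs (g y - g s) (g s)
    rw [show g y - g s + g s = g y by ring] at htr
    rw [hMdef]
    linarith
  set ε := 1/Real.sqrt (1 + M^2) with hεdef
  have hε0 : 0 < ε := by
    rw [hεdef]
    have : 0 < Real.sqrt (1 + M^2) := Real.sqrt_pos.2 (by positivity)
    positivity
  obtain ⟨N, hNp⟩ := hconv K hKU (isCompact_closedBall _ _) ε hε0
  -- choose m
  obtain ⟨Nb, hNb⟩ := (Metric.tendsto_atTop.1 hqlim) ((1 - Complex.abs qst)/2)
    (by linarith)
  have hylim : Tendsto (fun m => phiM wst (q m)) atTop (𝓝 s) := by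
    have hc : Tendsto (fun m => phiM wst (q m)) atTop (𝓝 (phiM wst qst)) := by
      apply Tendsto.div
      · exact hqlim.add tendsto_const_nhds
      · exact (hqlim.mul tendsto_const_nhds).const_add 1
      · exact one_add_mul_conj_ne hqst1 hwstd
    rwa [show phiM wst qst = s from phiM_inv_right hwstd hsd] at hc
  obtain ⟨Nc, hNc⟩ := (Metric.tendsto_atTop.1 hylim) δ hδ0
  set m := max N (max Nb Nc) with hmdef
  have hmN : N ≤ m := le_max_left _ _
  have hqm : Complex.abs (q m) ≤ ρ := by
    have := hNb m (le_trans (le_max_left Nb Nc) (le_max_right N _))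
    rw [Complex.dist_eq, Complex.norm_eq_abs] at this
    have htr := AbsoluteValue.add_le Complex.abs (q m - qst) qst
    rw [show q m - qst + qst = q m by ring] at htr
    rw [hρdef]
    linarith
  have hqm1 : Complex.abs (q m) < 1 := lt_of_le_of_lt hqm hρ1
  have hqmK : q m ∈ K := by
    simp only [hKdef, mem_closedBall_zero_iff, Complex.norm_eq_abs]
    exact hqm
  set y := phiM wst (q m) with hydef
  have hys : Complex.abs (y - s) < δ := by
    have := hNc m (le_trans (le_max_right Nb Nc) (le_max_right N _))
    rwa [Complex.dist_eq] at this
  have hyne : y ≠ s := by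
    intro hEq
    have hvm : phiM (v m) (q m) = s := phiM_inv_right (hvd m) hsd
    have : v m = wst := mobius_base_inj hqm1 hsd (hvd m) hwstd hvm (hydef ▸ hEq)
    exact hvne m this
  -- choose n
  have hxlim : Tendsto (fun n => phiM (v n) (q m)) atTop (𝓝 y) := by
    have hc : Tendsto (fun n => phiM (v n) (q m)) atTop (𝓝 (phiM wst (q m))) := by
      apply Tendsto.div
      · exact tendsto_const_nhds.add hvlim
      · exact (tendsto_const_nhds.mul ((Complex.continuous_conj.tendsto _).comp hvlim)).const_add 1
      · exact one_add_mul_conj_ne hqm1 hwstd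
    exact hc
  have hyabs : 0 < Complex.abs (y - s) := AbsoluteValue.pos _ (sub_ne_zero_of_ne hyne)
  set η := min (Complex.abs (y - s)) (δ - Complex.abs (y - s)) with hηdef
  have hη0 : 0 < η := lt_min hyabs (by linarith)
  obtain ⟨Nd, hNd⟩ := (Metric.tendsto_atTop.1 hxlim) η hη0
  set n := max N Nd with hndef
  set x := phiM (v n) (q m) with hxdef
  have hxy : Complex.abs (x - y) < η := by
    have := hNd n (le_max_right _ _)
    rwa [Complex.dist_eq] at this
  have hxs : Complex.abs (x - s) < δ := by
    have htr := AbsoluteValue.add_le Complex.abs (x - y) (y - s)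
    rw [show x - y + (y - s) = x - s by ring] at htr
    have h1 : Complex.abs (x - y) < δ - Complex.abs (y - s) :=
      lt_of_lt_of_le hxy (min_le_right _ _)
    linarith
  have hxne : x ≠ s := by
    intro hEq
    have : Complex.abs (x - y) < Complex.abs (y - s) := lt_of_lt_of_le hxy (min_le_left _ _)
    rw [hEq, AbsoluteValue.map_sub] at this
    exact absurd this (lt_irrefl _)
  obtain ⟨hxval, hxbound⟩ := key x hxs hxne
  -- contradictions
  have hsm : phiM (w (σ m)) (q m) = s := phiM_inv_right (hvd m) hsd
  have e1 : sphDist Option.none (h (q m)) < ε := by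
    have := hNp m hmN (q m) hqmK
    rwa [hsm, toSphere_eq_none hna] at this
  have e2 : sphDist (Option.some (g x)) (h (q m)) < ε := by
    have := hNp n (le_max_left _ _) (q m) hqmK
    rwa [show phiM (w (σ n)) (q m) = x from rfl, hxval] at this
  have e3 : sphDist Option.none (Option.some (g x)) < 2 * ε := by
    calc sphDist Option.none (Option.some (g x))
        ≤ sphDist Option.none (h (q m)) + sphDist (h (q m)) (Option.some (g x)) :=
          sph_triangle _ _ _
      _ < ε + ε := by
          rw [sph_comm (h (q m)) (Option.some (g x))]
          exact add_lt_add e1 e2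
      _ = 2 * ε := by ring
  have e4 : 2 * ε ≤ sphDist Option.none (Option.some (g x)) := by
    have := sph_none_some_ge (M := M) hxbound
    rw [hεdef]
    calc 2 * (1/Real.sqrt (1 + M^2)) = 2 / Real.sqrt (1 + M^2) := by ring
      _ ≤ sphDist Option.none (Option.some (g x)) := this
  linarith

end MainAux

theorem stmt_13 (θ : ℝ) (γ : SimpleCurve (Complex.exp (θ * Complex.I)))
    (f : ℂ → ℂ) (hf : MeromorphicOn f unitDisc) :
    NormalAlong (toSphere f) γ.carrier unitDisc ↔
      ∀ γ₁ : SimpleCurve (Complex.exp (θ * Complex.I)),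
        (∃ r : ℝ, 0 < r ∧ r < 1 ∧ γ₁.carrier ⊆ Delta r γ.carrier) →
        NormalAlong (toSphere f) γ₁.carrier unitDisc := by
  constructor
  · intro hN γ₁ hex
    obtain ⟨r, hr0, hr1, hsub⟩ := hex
    by_cases hfake : ∃ s ∈ unitDisc, ¬ AnalyticAt ℂ f s ∧
        ∃ g : ℂ → ℂ, AnalyticAt ℂ g s ∧ f =ᶠ[𝓝[≠] s] g
    · obtain ⟨s, hs, hna, g, hg, hfg⟩ := hfake
      exact absurd hN (MainAux.not_normal_of_fake γ hs hna hg hfg)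
    · exact MainAux.transport (SphAux.scont_toSphere hf hfake)
        γ.carrier_subset_unitDisc hN hr0 hr1 hsub
  · intro hAll
    apply hAll γ
    refine ⟨1/2, by norm_num, by norm_num, ?_⟩
    intro x hx
    have hxd : x ∈ unitDisc := γ.carrier_subset_unitDisc hx
    simp only [Delta, mem_iUnion, exists_prop, mem_sep_iff]
    refine ⟨x, hx, hxd, ?_⟩
    have hd0 : dph x x = 0 := by simp [dph]
    rw [hd0]
    norm_num

end
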